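/- For all odd positive integers r and s and every positive integer n, there exists a bijection σ : {1,…,n} → {1,…,n} such that the sequence σ(1), …, σ(n) avoids (r, s) 3-progressions. -/

import Mathlib

/-- Bit-reversal key on the low `B` bits. -/
def gkey : ℕ → ℕ → ℕ
  | 0, _ => 0
  | B+1, v => (v % 2) * 2^B + gkey B (v / 2)

lemma gkey_lt (B v : ℕ) : gkey B v < 2^B := by
  induction B generalizing v with
  | zero => simp [gkey]
  | succ B ih =>
    have h1 : v % 2 ≤ 1 := Nat.le_of_lt_succ (Nat.mod_lt _ (by norm_num))
    have h2 := ih (v / 2)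
    simp only [gkey, pow_succ]
    nlinarith

lemma gkey_mono {k B x y : ℕ} (hkB : k < B)
    (hlow : ∀ j < k, x.testBit j = y.testBit j)
    (hx : x.testBit k = false) (hy : y.testBit k = true) :
    gkey B x < gkey B y := by
  induction k generalizing B x y with
  | zero =>
    obtain ⟨B, rfl⟩ : ∃ B', B = B' + 1 := ⟨B - 1, by omega⟩
    rw [Nat.testBit_zero] at hx hy
    simp only [decide_eq_false_iff_not, decide_eq_true_eq] at hx hy
    have hx' : x % 2 = 0 := by omega
    have hbx := gkey_lt B (x / 2)
    have hby := gkey_lt B (y / 2)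
    simp only [gkey, hx', hy]
    omega
  | succ k ih =>
    obtain ⟨B, rfl⟩ : ∃ B', B = B' + 1 := ⟨B - 1, by omega⟩
    have h0 : x % 2 = y % 2 := by
      have := hlow 0 (Nat.succ_pos k)
      rw [Nat.testBit_zero, Nat.testBit_zero] at this
      have hx2 := Nat.mod_two_eq_zero_or_one x
      have hy2 := Nat.mod_two_eq_zero_or_one y
      rcases hx2 with h | h <;> rcases hy2 with h' | h' <;> simp [h, h'] at this ⊢
    have hrec : gkey B (x / 2) < gkey B (y / 2) := by
      apply ih (by omega)
      · intro j hj
        have := hlow (j + 1) (by omega)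
        rwa [Nat.testBit_succ, Nat.testBit_succ] at this
      · rw [← Nat.testBit_succ]; exact hx
      · rw [← Nat.testBit_succ]; exact hy
    simp only [gkey, h0]
    omega
lemma testBit_eq_of_mod {x y k : ℕ} (h : x % 2^k = y % 2^k) {j : ℕ} (hj : j < k) :
    x.testBit j = y.testBit j := by
  have h1 := Nat.testBit_mod_two_pow x k j
  have h2 := Nat.testBit_mod_two_pow y k j
  rw [h] at h1
  simpa [hj] using h1.symm.trans h2

lemma testBit_ne_of_mod {x y k : ℕ} (h : x % 2^k = y % 2^k)
    (h2 : x % 2^(k+1) ≠ y % 2^(k+1)) : x.testBit k ≠ y.testBit k := by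
  intro heq
  apply h2
  apply Nat.eq_of_testBit_eq
  intro i
  rw [Nat.testBit_mod_two_pow, Nat.testBit_mod_two_pow]
  rcases lt_trichotomy i k with hi | rfl | hi
  · simp [testBit_eq_of_mod h hi]
  · simp [heq]
  · simp [show ¬ i < k + 1 by omega]

/-- Core arithmetic fact: if `b = a + r*d`, `c = b + s*d` with `r, s` odd and `d ≠ 0`,
then we cannot have `gkey B a ≤ gkey B b ≤ gkey B c` (for `B` large enough). -/
lemma key_lemma {r s : ℕ} (hrodd : Odd r) (hsodd : Odd s) {a b c : ℕ} {d : ℤ}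
    (hd : d ≠ 0) (hab : (b:ℤ) = a + r * d) (hbc : (c:ℤ) = b + s * d)
    {B : ℕ} (ha : a < 2^B) (hb : b < 2^B)
    (h1 : gkey B a ≤ gkey B b) (h2 : gkey B b ≤ gkey B c) : False := by
  -- 2-adic valuation of d: d = 2^k * e with e odd
  obtain ⟨k, m, hm2, hdm⟩ := Nat.exists_eq_pow_mul_and_not_dvd
    (Int.natAbs_ne_zero.mpr hd) 2 (by norm_num)
  have hdk : (2:ℤ)^k ∣ d := by
    have h1 : ((2^k : ℕ) : ℤ) ∣ (d.natAbs : ℤ) := Int.natCast_dvd_natCast.mpr ⟨m, hdm⟩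
    push_cast at h1
    exact h1.trans ((abs_dvd d d).mpr dvd_rfl)
  obtain ⟨e, he⟩ := hdk
  have heodd : Odd e := by
    rw [← Int.natAbs_odd]
    have : d.natAbs = 2^k * e.natAbs := by
      rw [he, Int.natAbs_mul, Int.natAbs_pow]; rfl
    have hme : m = e.natAbs := by
      have h2k : (0:ℕ) < 2^k := Nat.pow_pos (by norm_num)
      exact Nat.eq_of_mul_eq_mul_left h2k (by rw [← hdm, this])
    rw [← hme]
    exact Nat.odd_iff.mpr (Nat.two_dvd_ne_zero.mp hm2)
  -- For odd t, 2^k divides t*d exactly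
  have key : ∀ t : ℕ, Odd t → ((2:ℤ)^k ∣ (t:ℤ) * d ∧ ¬ (2:ℤ)^(k+1) ∣ (t:ℤ) * d) := by
    intro t ht
    refine ⟨Dvd.dvd.mul_left ⟨e, he⟩ t, ?_⟩
    rintro ⟨u, hu⟩
    have hte : Odd ((t:ℤ) * e) := (Int.odd_coe_nat t |>.mpr ht).mul heodd
    have : (t:ℤ) * e = 2 * u := by
      have h2k : (2:ℤ)^k ≠ 0 := by positivity
      have : (2:ℤ)^k * ((t:ℤ) * e) = 2^k * (2 * u) := by
        rw [he] at hu; linear_combination hu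
      exact mul_left_cancel₀ h2k this
    rcases hte with ⟨v, hv⟩
    omega
  obtain ⟨hab1, hab2⟩ := key r hrodd
  obtain ⟨hbc1, hbc2⟩ := key s hsodd
  rw [show (r:ℤ) * d = (b:ℤ) - a by omega] at hab1 hab2
  rw [show (s:ℤ) * d = (c:ℤ) - b by omega] at hbc1 hbc2
  -- translate to ℕ congruences
  have mab : a % 2^k = b % 2^k := by
    have := Nat.modEq_iff_dvd.mpr (by exact_mod_cast hab1 : ((2^k : ℕ) : ℤ) ∣ (b:ℤ) - a)
    exact this
  have mab2 : a % 2^(k+1) ≠ b % 2^(k+1) := by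
    intro h
    exact hab2 (by exact_mod_cast Nat.modEq_iff_dvd.mp h)
  have mbc : b % 2^k = c % 2^k := by
    exact Nat.modEq_iff_dvd.mpr (by exact_mod_cast hbc1)
  have mbc2 : b % 2^(k+1) ≠ c % 2^(k+1) := by
    intro h
    exact hbc2 (by exact_mod_cast Nat.modEq_iff_dvd.mp h)
  -- k < B
  have hba : (b:ℤ) - a ≠ 0 := by
    rw [show (b:ℤ) - a = r * d by omega]
    exact mul_ne_zero (by exact_mod_cast hrodd.pos.ne') hd
  have hkB : k < B := by
    have h2k : (2:ℕ)^k ∣ ((b:ℤ) - a).natAbs := by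
      rw [← Int.natAbs_natCast (2^k)]
      exact Int.natAbs_dvd_natAbs.mpr (by exact_mod_cast hab1)
    have hle : (2:ℕ)^k ≤ ((b:ℤ) - a).natAbs :=
      Nat.le_of_dvd (Int.natAbs_pos.mpr hba) h2k
    have : ((b:ℤ) - a).natAbs < 2^B := by
      have := Int.natAbs_sub_le (b:ℤ) a
      omega
    have : (2:ℕ)^k < 2^B := by omega
    exact (Nat.pow_lt_pow_iff_right (by norm_num)).mp this
  -- conclude via gkey_mono
  have hab3 := testBit_ne_of_mod mab mab2
  have hbc3 := testBit_ne_of_mod mbc mbc2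
  have hbk : b.testBit k = true := by
    by_contra hx
    rw [Bool.not_eq_true] at hx
    have hak : a.testBit k = true := by
      cases hak : a.testBit k
      · exact absurd (hak.trans hx.symm) hab3
      · rfl
    have := gkey_mono hkB (fun j hj => testBit_eq_of_mod mab.symm hj) hx hak
    omega
  have hck : c.testBit k = false := by
    cases hck : c.testBit k
    · rfl
    · exact absurd (hbk.trans hck.symm) hbc3
  have := gkey_mono hkB (fun j hj => testBit_eq_of_mod mbc.symm hj) hck hbk
  omega
theorem exists_finite_perm_avoiding_rs_3prog (r s n : ℕ)
    (hrodd : Odd r) (hr : 0 < r) (hsodd : Odd s) (hs : 0 < s) (hn : 0 < n) :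
    ∃ σ : ℕ → ℕ, Set.BijOn σ (Set.Icc 1 n) (Set.Icc 1 n) ∧
      ¬ ∃ i₁ i₂ i₃, i₁ ∈ Set.Icc 1 n ∧ i₂ ∈ Set.Icc 1 n ∧ i₃ ∈ Set.Icc 1 n ∧
        i₁ < i₂ ∧ i₂ < i₃ ∧ ∃ d : ℤ, d ≠ 0 ∧
          (σ i₂ : ℤ) = (σ i₁ : ℤ) + r * d ∧ (σ i₃ : ℤ) = (σ i₂ : ℤ) + s * d := by
  classical
  set key := fun a b : ℕ => gkey n a ≤ gkey n b with hkeydef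
  haveI : IsTotal ℕ key := ⟨fun a b => le_total _ _⟩
  haveI : IsTrans ℕ key := ⟨fun a b c => le_trans⟩
  set L := List.insertionSort key (List.range' 1 n) with hLdef
  have hperm : L.Perm (List.range' 1 n) := List.perm_insertionSort key _
  have hsorted : L.Pairwise key := List.pairwise_insertionSort key _
  have hlen : L.length = n := by rw [hperm.length_eq, List.length_range']
  have hnodup : L.Nodup := hperm.nodup_iff.mpr (List.nodup_range' (s := 1) (n := n))
  have hmem : ∀ x, x ∈ L ↔ 1 ≤ x ∧ x < 1 + n :=
    fun x => (hperm.mem_iff).trans List.mem_range'_1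
  set σ := fun i : ℕ => L.getD (i - 1) 0 with hσdef
  have hσval : ∀ i ∈ Set.Icc 1 n, ∃ h : i - 1 < L.length, σ i = L.get ⟨i - 1, h⟩ := by
    intro i hi
    simp only [Set.mem_Icc] at hi
    exact ⟨by omega, List.getD_eq_get L 0 ⟨i - 1, by omega⟩⟩
  have hσmem : ∀ i ∈ Set.Icc 1 n, σ i ∈ Set.Icc 1 n := by
    intro i hi
    obtain ⟨h, hv⟩ := hσval i hi
    have := (hmem (L.get ⟨i - 1, h⟩)).mp (L.get_mem _)
    simp only [Set.mem_Icc]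
    omega
  refine ⟨σ, ⟨hσmem, ?_, ?_⟩, ?_⟩
  · -- InjOn
    intro i hi j hj hij
    obtain ⟨h1, hv1⟩ := hσval i hi
    obtain ⟨h2, hv2⟩ := hσval j hj
    rw [hv1, hv2] at hij
    have := Fin.mk.injEq .. ▸ (hnodup.get_inj_iff.mp hij)
    simp only [Set.mem_Icc] at hi hj
    have : i - 1 = j - 1 := Fin.mk.inj_iff.mp (hnodup.get_inj_iff.mp hij)
    omega
  · -- SurjOn
    intro v hv
    simp only [Set.mem_Icc] at hv
    have : v ∈ L := (hmem v).mpr (by omega)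
    obtain ⟨idx, hidx⟩ := List.mem_iff_get.mp this
    refine ⟨idx.1 + 1, ?_, ?_⟩
    · simp only [Set.mem_Icc]
      have := idx.2
      omega
    · obtain ⟨h, hval⟩ := hσval (idx.1 + 1) (by simp only [Set.mem_Icc]; have := idx.2; omega)
      rw [hval]
      simpa using hidx
  · -- avoidance
    rintro ⟨i₁, i₂, i₃, h1, h2, h3, h12, h23, d, hd, e1, e2⟩
    have hb1 := hσmem i₁ h1
    have hb2 := hσmem i₂ h2
    simp only [Set.mem_Icc] at hb1 hb2 h1 h2 h3
    obtain ⟨g1, gv1⟩ := hσval i₁ (by simp only [Set.mem_Icc]; omega)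
    obtain ⟨g2, gv2⟩ := hσval i₂ (by simp only [Set.mem_Icc]; omega)
    obtain ⟨g3, gv3⟩ := hσval i₃ (by simp only [Set.mem_Icc]; omega)
    have hk1 : key (σ i₁) (σ i₂) := by
      rw [gv1, gv2]
      exact hsorted.rel_get_of_lt (by simp only [Fin.mk_lt_mk]; omega)
    have hk2 : key (σ i₂) (σ i₃) := by
      rw [gv2, gv3]
      exact hsorted.rel_get_of_lt (by simp only [Fin.mk_lt_mk]; omega)
    have ha : σ i₁ < 2 ^ n := lt_of_le_of_lt hb1.2 (Nat.lt_two_pow_self (n := n))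
    have hb : σ i₂ < 2 ^ n := lt_of_le_of_lt hb2.2 (Nat.lt_two_pow_self (n := n))
    exact key_lemma hrodd hsodd hd e1 e2 ha hb hk1 hk2
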